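/- With D = ((1/α)((1/α²)−1)(σ₁/σ₂) H_dig H_digᵀ + (3/2) D_L) ⊗ I_n and P defined by α⁻¹P = D − AᵀA, the matrix P satisfies P ⪰ ((1/α²)−1)(σ₁/σ₂) H Hᵀ − (α/4) AᵀA, provided α ∈ (0,1], σ₁, σ₂ > 0, H = H_dig ⊗ I_n, A = A_in ⊗ I_n, and 2 D_L ⪰ A_inᵀ A_in. -/

import Mathlib

open Matrix

lemma kron_one_psd {l n : ℕ} {M : Matrix (Fin l) (Fin l) ℝ} (hM : M.PosSemidef) :
    (Matrix.kroneckerMap (· * ·) M (1 : Matrix (Fin n) (Fin n) ℝ)).PosSemidef := by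
  rw [Matrix.posSemidef_iff_dotProduct_mulVec]
  constructor
  · ext ⟨i, j⟩ ⟨k, m⟩
    have hsym : M k i = M i k := by
      conv_lhs => rw [← hM.1]
      simp [Matrix.conjTranspose_apply]
    simp [Matrix.conjTranspose_apply, Matrix.kroneckerMap_apply, Matrix.one_apply, hsym,
      eq_comm]
  · intro x
    have key : (star x) ⬝ᵥ ((Matrix.kroneckerMap (· * ·) M
          (1 : Matrix (Fin n) (Fin n) ℝ)) *ᵥ x)
        = ∑ j : Fin n, (star (fun i => x (i, j))) ⬝ᵥ (M *ᵥ (fun i => x (i, j))) := by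
      simp only [dotProduct, Matrix.mulVec, Fintype.sum_prod_type,
        Matrix.kroneckerMap_apply, Matrix.one_apply, mul_ite, ite_mul, mul_one, mul_zero,
        zero_mul, one_mul, Finset.sum_ite_eq, Finset.sum_ite_eq', Finset.mem_univ, if_true,
        star_trivial]
      rw [Finset.sum_comm]
    rw [key]
    exact Finset.sum_nonneg fun j _ => hM.dotProduct_mulVec_nonneg _


/-- The matrix design D = ((1/α)((1/α²)−1)(σ₁/σ₂) H_dig H_digᵀ + (3/2) D_L) ⊗ Iₙ with
α⁻¹ P = D − AᵀA satisfies the convergence condition P ⪰ ((1/α²)−1)(σ₁/σ₂) H Hᵀ − (α/4) AᵀA. -/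
theorem matrix_design_condition {l n : ℕ} {ι κ : Type*} [Fintype ι] [Fintype κ]
    (α σ₁ σ₂ : ℝ) (hα : α ∈ Set.Ioc (0 : ℝ) 1) (hσ₁ : 0 < σ₁) (hσ₂ : 0 < σ₂)
    (H_dig : Matrix (Fin l) κ ℝ) (A_in : Matrix ι (Fin l) ℝ)
    (D_L : Matrix (Fin l) (Fin l) ℝ)
    (hDL : D_L = Matrix.diagonal (fun i => (A_in.transpose * A_in) i i))
    (hPSD : ((2 : ℝ) • D_L - A_in.transpose * A_in).PosSemidef)
    (H : Matrix (Fin l × Fin n) (κ × Fin n) ℝ)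
    (hH : H = Matrix.kroneckerMap (· * ·) H_dig (1 : Matrix (Fin n) (Fin n) ℝ))
    (A : Matrix (ι × Fin n) (Fin l × Fin n) ℝ)
    (hA : A = Matrix.kroneckerMap (· * ·) A_in (1 : Matrix (Fin n) (Fin n) ℝ))
    (D : Matrix (Fin l × Fin n) (Fin l × Fin n) ℝ)
    (hD : D = Matrix.kroneckerMap (· * ·)
        (((1 / α) * ((1 / α ^ 2) - 1) * (σ₁ / σ₂)) • (H_dig * H_dig.transpose)
          + (3 / 2 : ℝ) • D_L) (1 : Matrix (Fin n) (Fin n) ℝ))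
    (P : Matrix (Fin l × Fin n) (Fin l × Fin n) ℝ)
    (hP : P = α • (D - A.transpose * A)) :
    (P - ((((1 / α ^ 2) - 1) * (σ₁ / σ₂)) • (H * H.transpose)
        - (α / 4) • (A.transpose * A))).PosSemidef := by
  have hα0 : α ≠ 0 := ne_of_gt hα.1
  have key : P - ((((1 / α ^ 2) - 1) * (σ₁ / σ₂)) • (H * H.transpose)
        - (α / 4) • (A.transpose * A))
      = Matrix.kroneckerMap (· * ·)
          ((3 * α / 4) • (((2 : ℝ) • D_L - A_in.transpose * A_in)))
          (1 : Matrix (Fin n) (Fin n) ℝ) := by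
    subst hP hD hH hA
    ext ⟨i, j⟩ ⟨k, m⟩
    simp only [Matrix.sub_apply, Matrix.add_apply, Matrix.smul_apply, Matrix.mul_apply,
      Matrix.transpose_apply, Matrix.kroneckerMap_apply, Matrix.one_apply, smul_eq_mul,
      Fintype.sum_prod_type, mul_ite, ite_mul, mul_one, mul_zero, zero_mul, one_mul,
      Finset.sum_ite_eq, Finset.sum_ite_eq', Finset.mem_univ, if_true, Finset.sum_const_zero]
    rcases eq_or_ne j m with rfl | hjm
    · simp only [if_pos rfl, if_pos trivial]
      field_simp
      ring
    · simp only [if_neg hjm, if_neg (Ne.symm hjm), Finset.sum_const_zero, mul_zero,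
        zero_mul, sub_zero, zero_sub, smul_eq_mul]
  rw [key]
  refine kron_one_psd (Matrix.posSemidef_iff_dotProduct_mulVec.mpr ⟨?_, ?_⟩)
  · show _ = _
    rw [Matrix.conjTranspose_smul, star_trivial, hPSD.1]
  · intro x
    have hα' : (0:ℝ) < α := hα.1
    have h34 : 0 ≤ 3 * α / 4 := by positivity
    calc (0:ℝ) ≤ (3 * α / 4) * (star x ⬝ᵥ ((2:ℝ) • D_L - A_in.transpose * A_in) *ᵥ x) :=
          mul_nonneg h34 (hPSD.dotProduct_mulVec_nonneg x)
      _ = star x ⬝ᵥ ((3 * α / 4) • ((2:ℝ) • D_L - A_in.transpose * A_in)) *ᵥ x := by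
          rw [Matrix.smul_mulVec, dotProduct_smul, smul_eq_mul]
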